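/- Let A be an entrywise nonnegative real n×n matrix and W a real m×m matrix with ‖W‖_∞ · ρ(A) < 1, where ρ(A) is the spectral radius of A. Then the spectral radius of |Aᵀ ⊗ W| is strictly less than 1, and consequently for every componentwise non-expansive φ : ℝ → ℝ and every real m×n matrix B, the equation X = φ(W X A + B) has exactly one solution X ∈ ℝ^{m×n}. -/

import Mathlib

open Matrix Kronecker

/-- The spectral radius of a real square matrix: the supremum of the moduli of its
complex eigenvalues (elements of the spectrum of the matrix viewed over `ℂ`). -/
noncomputable def specRad {ι : Type*} [Fintype ι] [DecidableEq ι]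
    (M : Matrix ι ι ℝ) : ENNReal :=
  spectralRadius ℂ (M.map Complex.ofReal)

/-- The maximum absolute row-sum norm of a real matrix:
the supremum over rows `i` of `∑ j, |M i j|`. -/
noncomputable def rowSumNorm {ι κ : Type*} [Fintype ι] [Fintype κ]
    (M : Matrix ι κ ℝ) : ℝ :=
  ⨆ i, ∑ j, |M i j|

section Aux
set_option linter.unusedSectionVars false

open scoped ENNReal NNReal
open Filter

attribute [local instance] Matrix.linftyOpNormedAddCommGroup Matrix.linftyOpNormedSpace
  Matrix.linftyOpNormedRing Matrix.linftyOpNormedAlgebra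

variable {ι κ α β : Type*} [Fintype ι] [Fintype κ] [Fintype α] [Fintype β]

lemma aux_nnnorm_map_ofReal (M : Matrix ι κ ℝ) : ‖M.map Complex.ofReal‖₊ = ‖M‖₊ := by
  simp [Matrix.linfty_opNNNorm_def, Matrix.map_apply]

lemma aux_map_ofReal_pow [DecidableEq ι] (M : Matrix ι ι ℝ) (k : ℕ) :
    (M ^ k).map Complex.ofReal = (M.map Complex.ofReal) ^ k := by
  exact map_pow (Complex.ofRealHom.mapMatrix) M k

lemma aux_nnnorm_map_abs (M : Matrix ι κ ℝ) : ‖M.map (fun a => |a|)‖₊ = ‖M‖₊ := by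
  simp [Matrix.linfty_opNNNorm_def, Matrix.map_apply, Real.nnnorm_abs]

lemma aux_rowSumNorm_eq (M : Matrix ι κ ℝ) : rowSumNorm M = ‖M‖ := by
  rw [Matrix.linfty_opNorm_def]
  have hg : ∀ i, ∑ j, |M i j| = ((∑ j, ‖M i j‖₊ : ℝ≥0) : ℝ) := by
    intro i
    push_cast
    simp [Real.norm_eq_abs]
  unfold rowSumNorm
  rcases isEmpty_or_nonempty ι with hι | hι
  · simp [Real.iSup_of_isEmpty]
  · refine le_antisymm (ciSup_le fun i => ?_) ?_
    · rw [hg i]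
      exact_mod_cast Finset.le_sup (f := fun i : ι => ∑ j, ‖M i j‖₊) (Finset.mem_univ i)
    · obtain ⟨i₀, -, h₀⟩ := Finset.exists_mem_eq_sup Finset.univ Finset.univ_nonempty
        (fun i : ι => ∑ j, ‖M i j‖₊)
      rw [h₀, ← hg i₀]
      exact le_ciSup (f := fun i : ι => ∑ j, |M i j|)
        (Set.Finite.bddAbove (Set.finite_range _)) i₀

lemma aux_row_sum_le (M : Matrix ι κ ℝ) (i : ι) : ∑ j, ‖M i j‖₊ ≤ ‖M‖₊ := by
  rw [Matrix.linfty_opNNNorm_def]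
  exact Finset.le_sup (f := fun i : ι => ∑ j, ‖M i j‖₊) (Finset.mem_univ i)

lemma aux_entry_le (M : Matrix ι κ ℝ) (i : ι) (j : κ) : ‖M i j‖₊ ≤ ‖M‖₊ :=
  le_trans (Finset.single_le_sum (f := fun j => ‖M i j‖₊) (fun _ _ => zero_le)
    (Finset.mem_univ j)) (aux_row_sum_le M i)

lemma aux_nnnorm_le_of_abs_le {M P : Matrix ι κ ℝ} (h : ∀ i j, |M i j| ≤ P i j) :
    ‖M‖₊ ≤ ‖P‖₊ := by
  rw [Matrix.linfty_opNNNorm_def]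
  refine Finset.sup_le fun i _ => le_trans (Finset.sum_le_sum fun j _ => ?_) (aux_row_sum_le P i)
  rw [← NNReal.coe_le_coe]
  simpa [Real.norm_eq_abs] using (h i j).trans (le_abs_self _)

lemma aux_kron_nnnorm_le (P : Matrix ι κ ℝ) (Q : Matrix α β ℝ) :
    ‖P ⊗ₖ Q‖₊ ≤ ‖P‖₊ * ‖Q‖₊ := by
  rw [Matrix.linfty_opNNNorm_def]
  refine Finset.sup_le fun p _ => ?_
  obtain ⟨i, a⟩ := p
  have : ∑ q : κ × β, ‖(P ⊗ₖ Q) (i, a) q‖₊ = (∑ j, ‖P i j‖₊) * (∑ b, ‖Q a b‖₊) := by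
    rw [Fintype.sum_prod_type, Finset.sum_mul_sum]
    simp [Matrix.kroneckerMap_apply, nnnorm_mul]
  rw [this]
  exact mul_le_mul' (aux_row_sum_le P i) (aux_row_sum_le Q a)

lemma aux_transpose_nnnorm_le (M : Matrix ι κ ℝ) :
    ‖Mᵀ‖₊ ≤ Fintype.card ι * ‖M‖₊ := by
  rw [Matrix.linfty_opNNNorm_def]
  refine Finset.sup_le fun j _ => ?_
  calc ∑ i, ‖Mᵀ j i‖₊ ≤ ∑ _i : ι, ‖M‖₊ :=
        Finset.sum_le_sum fun i _ => aux_entry_le M i j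
    _ = Fintype.card ι * ‖M‖₊ := by simp [Finset.sum_const, mul_comm]

lemma aux_kron_pow [DecidableEq ι] [DecidableEq α] (P : Matrix ι ι ℝ) (Q : Matrix α α ℝ)
    (k : ℕ) : (P ⊗ₖ Q) ^ k = (P ^ k) ⊗ₖ (Q ^ k) := by
  induction k with
  | zero => simp [Matrix.one_kronecker_one]
  | succ k ih => rw [pow_succ, pow_succ, pow_succ, ih, Matrix.mul_kronecker_mul]

/-- Key quantitative lemma extracted from Gelfand's formula. -/
lemma aux_key [DecidableEq ι] (A : Matrix ι ι ℝ) (w c0 : ℝ≥0)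
    (h : (w : ℝ≥0∞) * spectralRadius ℂ (A.map Complex.ofReal) < 1) :
    ∃ k : ℕ, 1 ≤ k ∧ c0 * w ^ k * ‖A ^ k‖₊ < 1 := by
  rcases eq_or_ne w 0 with rfl | hw0
  · exact ⟨1, le_refl 1, by simp⟩
  set Ac := A.map Complex.ofReal with hAc
  -- spectral radius is < (↑w)⁻¹
  have hwz : (w : ℝ≥0∞) ≠ 0 := ENNReal.coe_ne_zero.2 hw0
  have hρ : spectralRadius ℂ Ac < (w : ℝ≥0∞)⁻¹ := by
    by_contra hcon
    push_neg at hcon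
    have h1 : (1 : ℝ≥0∞) ≤ (w : ℝ≥0∞) * spectralRadius ℂ Ac := by
      rw [← ENNReal.mul_inv_cancel hwz ENNReal.coe_ne_top]
      exact mul_le_mul_right hcon _
    exact absurd h h1.not_gt
  obtain ⟨c, hc1, hc2⟩ := ENNReal.lt_iff_exists_nnreal_btwn.1 hρ
  have hwc : w * c < 1 := by
    have := (ENNReal.mul_lt_mul_iff_right hwz ENNReal.coe_ne_top).2 hc2
    rw [ENNReal.mul_inv_cancel hwz ENNReal.coe_ne_top] at this
    exact_mod_cast this
  -- Gelfand's formula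
  have hG := spectrum.pow_nnnorm_pow_one_div_tendsto_nhds_spectralRadius Ac
  have ev1 : ∀ᶠ k : ℕ in atTop, (‖Ac ^ k‖₊ : ℝ≥0∞) ^ (1 / k : ℝ) < (c : ℝ≥0∞) :=
    hG.eventually_lt_const hc1
  have ev2 : ∀ᶠ k : ℕ in atTop, (c0 : ℝ) * ((w * c : ℝ≥0) : ℝ) ^ k < 1 := by
    have ht : Filter.Tendsto (fun k : ℕ => (c0 : ℝ) * ((w * c : ℝ≥0) : ℝ) ^ k)
        atTop (nhds ((c0 : ℝ) * 0)) :=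
      (tendsto_pow_atTop_nhds_zero_of_lt_one (w * c).coe_nonneg
        (by exact_mod_cast hwc)).const_mul _
    rw [mul_zero] at ht
    exact ht.eventually_lt_const one_pos
  obtain ⟨k, h1, h2, hk1⟩ := (ev1.and (ev2.and (eventually_ge_atTop 1))).exists
  refine ⟨k, hk1, ?_⟩
  have hkR : (0 : ℝ) < (k : ℝ) := by exact_mod_cast hk1
  -- from h1 : ‖Ac ^ k‖₊ ^ (1/k) < c we get ‖Ac ^ k‖₊ < c ^ k
  have h3 : (‖Ac ^ k‖₊ : ℝ≥0∞) < (c : ℝ≥0∞) ^ (k : ℝ) := by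
    have := ENNReal.rpow_lt_rpow h1 hkR
    rwa [← ENNReal.rpow_mul, one_div, inv_mul_cancel₀ hkR.ne', ENNReal.rpow_one] at this
  have h4 : ‖A ^ k‖₊ < c ^ k := by
    have : (‖A ^ k‖₊ : ℝ≥0∞) < ((c ^ k : ℝ≥0) : ℝ≥0∞) := by
      rw [ENNReal.coe_pow, ← ENNReal.rpow_natCast (c : ℝ≥0∞) k]
      rw [← aux_nnnorm_map_ofReal (A ^ k), aux_map_ofReal_pow]
      exact h3
    exact_mod_cast this
  -- conclude
  have h5 : c0 * w ^ k * ‖A ^ k‖₊ ≤ c0 * (w * c) ^ k := by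
    rw [mul_pow, ← mul_assoc]
    exact mul_le_mul_right h4.le _
  refine lt_of_le_of_lt h5 ?_
  rw [← NNReal.coe_lt_coe]
  push_cast
  exact h2

lemma aux_abs_mul (M : Matrix ι κ ℝ) (Q : Matrix κ α ℝ) (i : ι) (j : α) :
    |(M * Q) i j| ≤ ((M.map fun a => |a|) * (Q.map fun a => |a|)) i j := by
  simp only [Matrix.mul_apply, Matrix.map_apply]
  exact (Finset.abs_sum_le_sum_abs _ _).trans (le_of_eq (by simp [abs_mul]))

lemma aux_mul_mono_left {M M' : Matrix ι κ ℝ} (Q : Matrix κ α ℝ)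
    (hQ : ∀ i j, 0 ≤ Q i j) (h : ∀ i j, M i j ≤ M' i j) (i : ι) (j : α) :
    (M * Q) i j ≤ (M' * Q) i j := by
  simp only [Matrix.mul_apply]
  exact Finset.sum_le_sum fun b _ => mul_le_mul_of_nonneg_right (h i b) (hQ b j)

lemma aux_mul_mono_right (P : Matrix ι κ ℝ) {M M' : Matrix κ α ℝ}
    (hP : ∀ i j, 0 ≤ P i j) (h : ∀ i j, M i j ≤ M' i j) (i : ι) (j : α) :
    (P * M) i j ≤ (P * M') i j := by
  simp only [Matrix.mul_apply]
  exact Finset.sum_le_sum fun b _ => mul_le_mul_of_nonneg_left (h b j) (hP i b)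

lemma aux_mul_entry_nonneg {P : Matrix ι κ ℝ} {Q : Matrix κ α ℝ}
    (hP : ∀ i j, 0 ≤ P i j) (hQ : ∀ i j, 0 ≤ Q i j) (i : ι) (j : α) :
    0 ≤ (P * Q) i j := by
  simp only [Matrix.mul_apply]
  exact Finset.sum_nonneg fun b _ => mul_nonneg (hP i b) (hQ b j)

lemma aux_pow_entry_nonneg [DecidableEq ι] {P : Matrix ι ι ℝ}
    (hP : ∀ i j, 0 ≤ P i j) (p : ℕ) (i j : ι) : 0 ≤ (P ^ p) i j := by
  induction p generalizing i j with
  | zero =>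
    rcases eq_or_ne i j with rfl | hij
    · simp [Matrix.one_apply_eq]
    · simp [Matrix.one_apply_ne hij]
  | succ p ih => rw [pow_succ]; exact aux_mul_entry_nonneg ih hP i j

lemma aux_sandwich (P : Matrix ι κ ℝ) {M M' : Matrix κ α ℝ} (Q : Matrix α β ℝ)
    (hP : ∀ i j, 0 ≤ P i j) (hQ : ∀ i j, 0 ≤ Q i j) (h : ∀ i j, M i j ≤ M' i j)
    (i : ι) (j : β) : (P * M * Q) i j ≤ (P * M' * Q) i j :=
  aux_mul_mono_left Q hQ (aux_mul_mono_right P hP h) i j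

lemma aux_abs_mul3 (P : Matrix ι κ ℝ) (M : Matrix κ α ℝ) (Q : Matrix α β ℝ) (i : ι) (j : β) :
    |(P * M * Q) i j| ≤ ((P.map fun a => |a|) * (M.map fun a => |a|) * (Q.map fun a => |a|)) i j := by
  refine (aux_abs_mul (P * M) Q i j).trans ?_
  refine aux_mul_mono_left _ (fun i j => abs_nonneg _) (fun a b => ?_) i j
  rw [Matrix.map_apply]
  exact aux_abs_mul P M a b

end Aux

section Main

attribute [local instance] Matrix.linftyOpNormedAddCommGroup Matrix.linftyOpNormedSpace
  Matrix.linftyOpNormedRing Matrix.linftyOpNormedAlgebra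


theorem stmt_12 {m n : ℕ} (A : Matrix (Fin n) (Fin n) ℝ) (hA : ∀ i j, 0 ≤ A i j)
    (W : Matrix (Fin m) (Fin m) ℝ)
    (h : ENNReal.ofReal (rowSumNorm W) * specRad A < 1) :
    specRad ((Aᵀ ⊗ₖ W).map fun a => |a|) < 1 ∧
    ∀ φ : ℝ → ℝ, (∀ a b : ℝ, |φ a - φ b| ≤ |a - b|) →
      ∀ B : Matrix (Fin m) (Fin n) ℝ,
        ∃! X : Matrix (Fin m) (Fin n) ℝ, X = (W * X * A + B).map φ := by
  classical
  have hW : ENNReal.ofReal (rowSumNorm W) = (‖W‖₊ : ENNReal) := by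
    rw [aux_rowSumNorm_eq]; exact ofReal_norm W
  rw [hW] at h
  obtain ⟨k, hk1, hkey⟩ := aux_key A ‖W‖₊ ((n : NNReal) + 1) h
  set Wa : Matrix (Fin m) (Fin m) ℝ := W.map (fun a => |a|) with hWaDef
  have hWaW : ‖Wa‖₊ = ‖W‖₊ := aux_nnnorm_map_abs W
  have hWa_nonneg : ∀ i j, 0 ≤ Wa i j := fun i j => abs_nonneg _
  have hAabs : (A.map fun a => |a|) = A := by
    ext i j
    exact abs_of_nonneg (hA i j)
  constructor
  · -- spectral radius part
    have hN : ((Aᵀ ⊗ₖ W).map fun a => |a|) = Aᵀ ⊗ₖ Wa := by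
      ext ⟨i, j⟩ ⟨a, b⟩
      simp [hWaDef, Matrix.kroneckerMap_apply, Matrix.map_apply, Matrix.transpose_apply, abs_mul,
        abs_of_nonneg (hA a i)]
    rw [hN]
    obtain ⟨j, rfl⟩ : ∃ j, k = j + 1 := ⟨k - 1, (Nat.succ_pred_eq_of_pos hk1).symm⟩
    set N : Matrix (Fin n × Fin m) (Fin n × Fin m) ℝ := Aᵀ ⊗ₖ Wa with hNdef
    set Nc := N.map Complex.ofReal with hNc
    have hbound : ‖N ^ (j + 1)‖₊ < 1 := by
      have e1 : N ^ (j + 1) = ((A ^ (j + 1))ᵀ) ⊗ₖ (Wa ^ (j + 1)) := by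
        rw [hNdef, aux_kron_pow, Matrix.transpose_pow]
      calc ‖N ^ (j + 1)‖₊ ≤ ‖(A ^ (j + 1))ᵀ‖₊ * ‖Wa ^ (j + 1)‖₊ := by
            rw [e1]; exact aux_kron_nnnorm_le _ _
        _ ≤ (Fintype.card (Fin n) * ‖A ^ (j + 1)‖₊) * ‖Wa‖₊ ^ (j + 1) :=
            mul_le_mul' (aux_transpose_nnnorm_le _) (nnnorm_pow_le' _ j.succ_pos)
        _ = (n : NNReal) * ‖W‖₊ ^ (j + 1) * ‖A ^ (j + 1)‖₊ := by
            rw [hWaW, Fintype.card_fin]; ring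
        _ ≤ ((n : NNReal) + 1) * ‖W‖₊ ^ (j + 1) * ‖A ^ (j + 1)‖₊ := by
            gcongr
            exact self_le_add_right _ _
        _ < 1 := hkey
    have hsr := spectrum.spectralRadius_le_pow_nnnorm_pow_one_div ℂ Nc j
    have hNcN : ‖Nc ^ (j + 1)‖₊ = ‖N ^ (j + 1)‖₊ := by
      rw [hNc, ← aux_map_ofReal_pow, aux_nnnorm_map_ofReal]
    have hexp : (0 : ℝ) < 1 / ((j : ℝ) + 1) := by positivity
    have hone : ‖(1 : Matrix (Fin n × Fin m) (Fin n × Fin m) ℂ)‖₊ ≤ 1 := by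
      rw [← Matrix.diagonal_one, Matrix.linfty_opNNNorm_diagonal, Pi.nnnorm_def]
      exact Finset.sup_le fun i _ => by simp
    have : spectralRadius ℂ Nc < 1 := by
      refine lt_of_le_of_lt hsr ?_
      calc (‖Nc ^ (j + 1)‖₊ : ENNReal) ^ (1 / ((j : ℝ) + 1)) *
            (‖(1 : Matrix (Fin n × Fin m) (Fin n × Fin m) ℂ)‖₊ : ENNReal) ^ (1 / ((j : ℝ) + 1))
          ≤ (‖Nc ^ (j + 1)‖₊ : ENNReal) ^ (1 / ((j : ℝ) + 1)) * 1 := by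
            exact mul_le_mul_right (ENNReal.rpow_le_one (by exact_mod_cast hone) hexp.le) _
        _ = (‖Nc ^ (j + 1)‖₊ : ENNReal) ^ (1 / ((j : ℝ) + 1)) := mul_one _
        _ < 1 := by
            refine ENNReal.rpow_lt_one ?_ hexp
            rw [hNcN]
            exact_mod_cast hbound
    exact this
  · -- fixed point part
    intro φ hφ B
    set F : Matrix (Fin m) (Fin n) ℝ → Matrix (Fin m) (Fin n) ℝ :=
      fun X => (W * X * A + B).map φ with hFdef
    have hbase : ∀ X Y : Matrix (Fin m) (Fin n) ℝ, ∀ i j,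
        |(F X - F Y) i j| ≤ (Wa * ((X - Y).map fun a => |a|) * A) i j := by
      intro X Y i j
      have e : (F X - F Y) i j = φ ((W * X * A + B) i j) - φ ((W * Y * A + B) i j) := by
        simp [hFdef, Matrix.map_apply, Matrix.sub_apply]
      rw [e]
      refine (hφ _ _).trans ?_
      have e2 : (W * X * A + B) i j - (W * Y * A + B) i j = (W * (X - Y) * A) i j := by
        have e3 : W * (X - Y) * A = W * X * A - W * Y * A := by
          rw [Matrix.mul_sub, Matrix.sub_mul]
        rw [e3, Matrix.sub_apply, Matrix.add_apply, Matrix.add_apply]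
        ring
      rw [e2]
      have := aux_abs_mul3 W (X - Y) A i j
      rwa [hAabs] at this
    have hiter : ∀ (p : ℕ) (X Y : Matrix (Fin m) (Fin n) ℝ) (i : Fin m) (j : Fin n),
        |(F^[p] X - F^[p] Y) i j| ≤
          ((Wa ^ p) * ((X - Y).map fun a => |a|) * (A ^ p)) i j := by
      intro p
      induction p with
      | zero =>
        intro X Y i j
        simp [Matrix.map_apply]
      | succ p ih =>
        intro X Y i j
        rw [Function.iterate_succ_apply, Function.iterate_succ_apply]
        refine (ih (F X) (F Y) i j).trans ?_
        have hmono := aux_sandwich (Wa ^ p) (A ^ p)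
          (aux_pow_entry_nonneg hWa_nonneg p) (aux_pow_entry_nonneg hA p)
          (M := (F X - F Y).map fun a => |a|)
          (M' := Wa * ((X - Y).map fun a => |a|) * A)
          (fun a b => by rw [Matrix.map_apply]; exact hbase X Y a b) i j
        refine hmono.trans (le_of_eq ?_)
        rw [pow_succ, pow_succ']
        simp only [Matrix.mul_assoc]
    have hlip : ∀ X Y : Matrix (Fin m) (Fin n) ℝ,
        ‖F^[k] X - F^[k] Y‖₊ ≤ (‖W‖₊ ^ k * ‖A ^ k‖₊) * ‖X - Y‖₊ := by
      intro X Y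
      have h1 : ‖F^[k] X - F^[k] Y‖₊ ≤
          ‖Wa ^ k * ((X - Y).map fun a => |a|) * A ^ k‖₊ :=
        aux_nnnorm_le_of_abs_le fun i j => hiter k X Y i j
      calc ‖F^[k] X - F^[k] Y‖₊
          ≤ ‖Wa ^ k‖₊ * ‖(X - Y).map fun a => |a|‖₊ * ‖A ^ k‖₊ :=
            h1.trans (le_trans (Matrix.linfty_opNNNorm_mul _ _)
              (mul_le_mul_left (Matrix.linfty_opNNNorm_mul _ _) _))
        _ ≤ ‖W‖₊ ^ k * ‖X - Y‖₊ * ‖A ^ k‖₊ := by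
            rw [aux_nnnorm_map_abs]
            exact mul_le_mul_left (mul_le_mul_left
              ((nnnorm_pow_le' _ hk1).trans (le_of_eq (by rw [hWaW]))) _) _
        _ = (‖W‖₊ ^ k * ‖A ^ k‖₊) * ‖X - Y‖₊ := by ring
    set c : NNReal := ‖W‖₊ ^ k * ‖A ^ k‖₊ with hc
    have hc1 : c < 1 := by
      refine lt_of_le_of_lt ?_ hkey
      calc c = ‖W‖₊ ^ k * ‖A ^ k‖₊ := rfl
        _ ≤ ((n : NNReal) + 1) * ‖W‖₊ ^ k * ‖A ^ k‖₊ := by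
            rw [mul_assoc]
            exact le_mul_of_one_le_left (zero_le) (le_add_self)
    have hlipschitz : LipschitzWith c (F^[k]) := by
      refine LipschitzWith.of_dist_le_mul fun X Y => ?_
      rw [dist_eq_norm, dist_eq_norm]
      exact_mod_cast hlip X Y
    have hcon : ContractingWith c (F^[k]) := ⟨hc1, hlipschitz⟩
    haveI : Nonempty (Matrix (Fin m) (Fin n) ℝ) := ⟨0⟩
    set x₀ := ContractingWith.fixedPoint (F^[k]) hcon with hx₀def
    have hx₀ : F^[k] x₀ = x₀ := hcon.fixedPoint_isFixedPt
    have hFx₀ : F x₀ = x₀ := by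
      have h1 : Function.IsFixedPt (F^[k]) (F x₀) := by
        show F^[k] (F x₀) = F x₀
        rw [← Function.iterate_succ_apply, Function.iterate_succ_apply', hx₀]
      rw [hcon.fixedPoint_unique h1, hx₀def]
    refine ⟨x₀, hFx₀.symm, fun y hy => ?_⟩
    have hy' : Function.IsFixedPt F y := hy.symm
    exact (hcon.fixedPoint_unique (hy'.iterate k)).trans hx₀def.symm

end Main
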